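/- Let p, q, u, v ∈ ℂ with p ≠ 0, q ≠ 0, u ≠ 0, v ≠ 0, u ≠ v and pu − qv ≠ 0, and define U = (v/p)(pu − qv)/(u − v) and V = (u/q)(pu − qv)/(u − v) (the map F_III). Then U ≠ 0, V ≠ 0, and the following three identities hold: (i) p·u·U = q·v·V; (ii) 1/U − 1/V = −(1/u − 1/v); (iii) pU − qV = −(pu − qv). These are the three alternating invariants with separated variables of F_III (the first in exponentiated form). -/

import Mathlib

/-- Alternating invariants with separated variables of the map F_III. -/
theorem stmt_18 (p q u v U V : ℂ) (hp : p ≠ 0) (hq : q ≠ 0)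
    (hu : u ≠ 0) (hv : v ≠ 0) (huv : u ≠ v) (hpq : p * u - q * v ≠ 0)
    (hU : U = v / p * (p * u - q * v) / (u - v))
    (hV : V = u / q * (p * u - q * v) / (u - v)) :
    U ≠ 0 ∧ V ≠ 0 ∧
    p * u * U = q * v * V ∧
    1 / U - 1 / V = -(1 / u - 1 / v) ∧
    p * U - q * V = -(p * u - q * v) := by
  have hd : u - v ≠ 0 := sub_ne_zero.mpr huv
  have hUne : U ≠ 0 := by
    rw [hU]; exact div_ne_zero (mul_ne_zero (div_ne_zero hv hp) hpq) hd
  have hVne : V ≠ 0 := by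
    rw [hV]; exact div_ne_zero (mul_ne_zero (div_ne_zero hu hq) hpq) hd
  refine ⟨hUne, hVne, ?_, ?_, ?_⟩
  · rw [hU, hV]; field_simp
  · have hpq' : p * u - v * q ≠ 0 := by rwa [mul_comm v q]
    rw [hU, hV]; field_simp; ring
  · rw [hU, hV]; field_simp; ring
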